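/- For all real a > 0 and b > 0, (1/(π b)) · ∫_0^π arctan( (b·sin φ)/a ) · sin φ dφ + (1/π) · ∫_0^π (a·sin²φ)/(b²·sin²φ + a²) dφ = 1/√(a² + b²). -/

import Mathlib

open Real MeasureTheory

lemma pos_aux {r t : ℝ} (hr : 0 < r) (h0 : 0 ≤ t) (h1 : t ≤ 1) : 0 < 1 + (r - 1) * t := by
  rcases le_or_gt r 1 with h | h
  · nlinarith [mul_nonneg (by linarith : (0:ℝ) ≤ 1 - r) (by linarith : (0:ℝ) ≤ 1 - t)]
  · nlinarith [mul_nonneg (by linarith : (0:ℝ) ≤ r - 1) h0]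

/-- Antiderivative of `x + arctan` of the auxiliary function. -/
lemma aux_hasDerivAt (r : ℝ) (hr : 0 < r) (φ : ℝ) :
    HasDerivAt (fun x : ℝ => x +
        Real.arctan ((r - 1) * Real.sin x * Real.cos x / (1 + (r - 1) * Real.sin x ^ 2)))
      (r / (1 + (r ^ 2 - 1) * Real.sin φ ^ 2)) φ := by
  have hs2 : Real.sin φ ^ 2 ≤ 1 := Real.sin_sq_le_one φ
  have hs0 : (0:ℝ) ≤ Real.sin φ ^ 2 := sq_nonneg _
  have hM : 0 < 1 + (r - 1) * Real.sin φ ^ 2 := pos_aux hr hs0 hs2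
  have hT : 0 < 1 + (r ^ 2 - 1) * Real.sin φ ^ 2 := pos_aux (pow_pos hr 2) hs0 hs2
  have hN : HasDerivAt (fun x : ℝ => (r - 1) * Real.sin x * Real.cos x)
      ((r - 1) * Real.cos φ * Real.cos φ + (r - 1) * Real.sin φ * (-Real.sin φ)) φ :=
    ((Real.hasDerivAt_sin φ).const_mul (r - 1)).mul (Real.hasDerivAt_cos φ)
  have hD : HasDerivAt (fun x : ℝ => 1 + (r - 1) * Real.sin x ^ 2)
      ((r - 1) * ((2 : ℕ) * Real.sin φ ^ 1 * Real.cos φ)) φ :=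
    (((Real.hasDerivAt_sin φ).pow 2).const_mul (r - 1)).const_add 1
  have hu := hN.div hD (ne_of_gt hM)
  have h := (hasDerivAt_id φ).add hu.arctan
  refine h.congr_deriv ?_
  symm
  simp only [Pi.div_apply]
  have hc2 : Real.cos φ ^ 2 = 1 - Real.sin φ ^ 2 := Real.cos_sq' φ
  have h1u : 0 < 1 + ((r - 1) * Real.sin φ * Real.cos φ / (1 + (r - 1) * Real.sin φ ^ 2)) ^ 2 := by
    positivity
  have key : 1 + ((r - 1) * Real.sin φ * Real.cos φ / (1 + (r - 1) * Real.sin φ ^ 2)) ^ 2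
      = (1 + (r ^ 2 - 1) * Real.sin φ ^ 2) / (1 + (r - 1) * Real.sin φ ^ 2) ^ 2 := by
    rw [eq_div_iff (by positivity), add_mul, div_pow, div_mul_cancel₀ _ (by positivity),
      mul_pow, mul_pow, hc2]
    ring
  rw [key]
  field_simp
  ring_nf
  rw [show Real.cos φ ^ 2 = 1 - Real.sin φ ^ 2 from hc2]
  have hM' : 1 + r * Real.sin φ ^ 2 - Real.sin φ ^ 2 ≠ 0 := by nlinarith
  field_simp
  ring

theorem lipschitz_decomposition (a b : ℝ) (ha : 0 < a) (hb : 0 < b) :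
    (1 / (π * b)) * (∫ φ in (0:ℝ)..π, Real.arctan (b * Real.sin φ / a) * Real.sin φ)
      + (1 / π) * (∫ φ in (0:ℝ)..π,
          a * Real.sin φ ^ 2 / (b ^ 2 * Real.sin φ ^ 2 + a ^ 2))
      = 1 / Real.sqrt (a ^ 2 + b ^ 2) := by
  have hS : 0 < Real.sqrt (a ^ 2 + b ^ 2) := Real.sqrt_pos.2 (by positivity)
  set S := Real.sqrt (a ^ 2 + b ^ 2) with hSdef
  have hS2 : S ^ 2 = a ^ 2 + b ^ 2 := Real.sq_sqrt (by positivity)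
  set r : ℝ := S / a with hrdef
  have hr : 0 < r := div_pos hS ha
  -- the combined integrand
  set f : ℝ → ℝ := fun φ =>
    Real.arctan (b * Real.sin φ / a) * Real.sin φ / b
      + a * Real.sin φ ^ 2 / (b ^ 2 * Real.sin φ ^ 2 + a ^ 2) with hfdef
  -- the antiderivative
  set G : ℝ → ℝ := fun φ =>
    -(Real.cos φ * Real.arctan (b * Real.sin φ / a)) / b
      + (1 / S) * (φ + Real.arctan ((r - 1) * Real.sin φ * Real.cos φ /
          (1 + (r - 1) * Real.sin φ ^ 2))) with hGdef
  have hderiv : ∀ φ ∈ Set.uIcc (0:ℝ) π, HasDerivAt G (f φ) φ := by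
    intro φ _
    have hDpos : 0 < b ^ 2 * Real.sin φ ^ 2 + a ^ 2 := by positivity
    have hc2 : Real.cos φ ^ 2 = 1 - Real.sin φ ^ 2 := Real.cos_sq' φ
    -- first part
    have h1inner : HasDerivAt (fun x : ℝ => b * Real.sin x / a) (b * Real.cos φ / a) φ :=
      ((Real.hasDerivAt_sin φ).const_mul b).div_const a
    have h1 : HasDerivAt (fun x : ℝ => -(Real.cos x * Real.arctan (b * Real.sin x / a)) / b)
        (-((-Real.sin φ) * Real.arctan (b * Real.sin φ / a)
          + Real.cos φ * (1 / (1 + (b * Real.sin φ / a) ^ 2) * (b * Real.cos φ / a))) / b) φ :=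
      (((Real.hasDerivAt_cos φ).mul h1inner.arctan).neg).div_const b
    have h1' : HasDerivAt (fun x : ℝ => -(Real.cos x * Real.arctan (b * Real.sin x / a)) / b)
        (Real.arctan (b * Real.sin φ / a) * Real.sin φ / b
          - a * Real.cos φ ^ 2 / (b ^ 2 * Real.sin φ ^ 2 + a ^ 2)) φ := by
      convert h1 using 1
      have h1a : 0 < 1 + (b * Real.sin φ / a) ^ 2 := by positivity
      field_simp
      ring
    -- second part
    have h2 : HasDerivAt (fun x : ℝ => (1 / S) * (x +
        Real.arctan ((r - 1) * Real.sin x * Real.cos x / (1 + (r - 1) * Real.sin x ^ 2))))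
        ((1 / S) * (r / (1 + (r ^ 2 - 1) * Real.sin φ ^ 2))) φ :=
      (aux_hasDerivAt r hr φ).const_mul (1 / S)
    have h2' : HasDerivAt (fun x : ℝ => (1 / S) * (x +
        Real.arctan ((r - 1) * Real.sin x * Real.cos x / (1 + (r - 1) * Real.sin x ^ 2))))
        (a / (b ^ 2 * Real.sin φ ^ 2 + a ^ 2)) φ := by
      convert h2 using 1
      have hden : 1 + (r ^ 2 - 1) * Real.sin φ ^ 2
          = (a ^ 2 + b ^ 2 * Real.sin φ ^ 2) / a ^ 2 := by
        rw [hrdef, div_pow, hS2]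
        field_simp
        ring
      rw [hden, hrdef]
      field_simp
      ring
    have h := h1'.add h2'
    have hval : f φ = (Real.arctan (b * Real.sin φ / a) * Real.sin φ / b
          - a * Real.cos φ ^ 2 / (b ^ 2 * Real.sin φ ^ 2 + a ^ 2))
        + a / (b ^ 2 * Real.sin φ ^ 2 + a ^ 2) := by
      rw [hfdef]
      simp only
      rw [hc2]
      field_simp
      ring
    rw [hGdef, hval]
    exact h
  -- continuity and integrability
  have hcont1 : Continuous (fun φ : ℝ => Real.arctan (b * Real.sin φ / a) * Real.sin φ) :=
    (Real.continuous_arctan.comp ((continuous_const.mul Real.continuous_sin).div_const a)).mul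
      Real.continuous_sin
  have hcont2 : Continuous (fun φ : ℝ => a * Real.sin φ ^ 2 / (b ^ 2 * Real.sin φ ^ 2 + a ^ 2)) := by
    apply Continuous.div (continuous_const.mul (Real.continuous_sin.pow 2))
      ((continuous_const.mul (Real.continuous_sin.pow 2)).add continuous_const)
    intro x; exact (by positivity : (0:ℝ) < b ^ 2 * Real.sin x ^ 2 + a ^ 2).ne'
  have hcontf : Continuous f := by
    rw [hfdef]
    exact (hcont1.div_const b).add hcont2
  have hFTC : (∫ φ in (0:ℝ)..π, f φ) = G π - G 0 :=
    intervalIntegral.integral_eq_sub_of_hasDerivAt hderiv (hcontf.intervalIntegrable 0 π)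
  have hGpi : G π = π / S := by
    simp only [hGdef]
    rw [Real.sin_pi, Real.cos_pi]
    norm_num
    ring
  have hG0 : G 0 = 0 := by
    simp only [hGdef]
    rw [Real.sin_zero, Real.cos_zero]
    norm_num
  have hsplit : (∫ φ in (0:ℝ)..π, f φ)
      = (1 / b) * (∫ φ in (0:ℝ)..π, Real.arctan (b * Real.sin φ / a) * Real.sin φ)
        + ∫ φ in (0:ℝ)..π, a * Real.sin φ ^ 2 / (b ^ 2 * Real.sin φ ^ 2 + a ^ 2) := by
    rw [hfdef]
    rw [intervalIntegral.integral_add ((hcont1.div_const b).intervalIntegrable 0 π)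
      (hcont2.intervalIntegrable 0 π)]
    congr 1
    rw [← intervalIntegral.integral_const_mul]
    congr 1
    ext φ
    ring
  have hpi : (0:ℝ) < π := Real.pi_pos
  rw [hsplit, hGpi, hG0] at hFTC
  have : (1 / (π * b)) * (∫ φ in (0:ℝ)..π, Real.arctan (b * Real.sin φ / a) * Real.sin φ)
      + (1 / π) * (∫ φ in (0:ℝ)..π, a * Real.sin φ ^ 2 / (b ^ 2 * Real.sin φ ^ 2 + a ^ 2))
      = (1 / π) * ((1 / b) * (∫ φ in (0:ℝ)..π, Real.arctan (b * Real.sin φ / a) * Real.sin φ)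
        + ∫ φ in (0:ℝ)..π, a * Real.sin φ ^ 2 / (b ^ 2 * Real.sin φ ^ 2 + a ^ 2)) := by
    field_simp
  rw [this, hFTC]
  field_simp
  ring
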